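/- Let d ≥ 1 be an integer and let μ be a probability measure on ℝ_+^d. Then μ is monotone if and only if for every i, j ∈ {1,…,d}, one has (μ ⊗ μ)({ (y,y') ∈ ℝ_+^d × ℝ_+^d : y_i ≥ y'_i or y_j ≤ y'_j }) = 1. -/

import Mathlib

open MeasureTheory Set MeasurableSpace
open scoped ENNReal

/-- The nonnegative orthant `ℝ_+^d` in `ℝ^d`. -/
def orthant (d : ℕ) : Set (EuclideanSpace ℝ (Fin d)) := {x | ∀ i, 0 ≤ x i}

/-- A probability measure `μ` on `ℝ_+^d` is monotone if it is the law of `q(U)` for some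
increasing map `q : [0,1) → ℝ_+^d`, with `U` uniform on `[0,1)`.  (Such a `q` is automatically
almost-everywhere measurable.) -/
def IsMonotoneMeasure (d : ℕ) (μ : Measure (EuclideanSpace ℝ (Fin d))) : Prop :=
  ∃ q : ℝ → EuclideanSpace ℝ (Fin d),
    AEMeasurable q (volume.restrict (Set.Ico (0 : ℝ) 1)) ∧
    (∀ s : ℝ, 0 ≤ s → s < 1 → q s ∈ orthant d) ∧
    (∀ s t : ℝ, 0 ≤ s → s ≤ t → t < 1 → ∀ i, q s i ≤ q t i) ∧
    μ = Measure.map q (volume.restrict (Set.Ico (0 : ℝ) 1))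

namespace MonotoneMeasureAux

variable {d : ℕ}

lemma measurable_coord (k : Fin d) : Measurable fun y : EuclideanSpace ℝ (Fin d) => y k :=
  (measurable_pi_apply k).comp (WithLp.measurable_ofLp 2 _)

lemma measurable_euclidean {α : Type*} [MeasurableSpace α] {f : α → EuclideanSpace ℝ (Fin d)}
    (h : ∀ k, Measurable fun t => f t k) : Measurable f := (WithLp.measurable_toLp 2 _).comp (measurable_pi_iff.2 h)

/-- A "rectangle" `{y | ∀ k, y k ≤ x k}`. -/
def rectSet (x : EuclideanSpace ℝ (Fin d)) : Set (EuclideanSpace ℝ (Fin d)) :=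
  {y | ∀ k, y k ≤ x k}

lemma measurableSet_rectSet (x : EuclideanSpace ℝ (Fin d)) : MeasurableSet (rectSet x) := by
  have h : rectSet x = ⋂ k, {y : EuclideanSpace ℝ (Fin d) | y k ≤ x k} := by
    ext y; simp [rectSet]
  rw [h]
  exact MeasurableSet.iInter fun k => measurableSet_le (measurable_coord k) measurable_const

lemma isPiSystem_rectSet :
    IsPiSystem {S : Set (EuclideanSpace ℝ (Fin d)) | ∃ x, S = rectSet x} := by
  rintro _ ⟨x, rfl⟩ _ ⟨y, rfl⟩ -
  refine ⟨WithLp.toLp 2 (fun k => min (x k) (y k) : Fin d → ℝ), ?_⟩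
  ext z
  simp [rectSet, le_min_iff, forall_and]

lemma generateFrom_rectSet (hd : 1 ≤ d) :
    (inferInstance : MeasurableSpace (EuclideanSpace ℝ (Fin d))) =
      generateFrom {S : Set (EuclideanSpace ℝ (Fin d)) | ∃ x, S = rectSet x} := by
  classical
  refine le_antisymm ?_ (generateFrom_le ?_)
  · have hpi : (inferInstance : MeasurableSpace (EuclideanSpace ℝ (Fin d))) =
        MeasurableSpace.comap WithLp.ofLp MeasurableSpace.pi := rfl
    rw [hpi, MeasurableSpace.pi, MeasurableSpace.comap_iSup]
    refine iSup_le fun k => ?_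
    rw [MeasurableSpace.comap_comp]
    have hb : (Real.measurableSpace : MeasurableSpace ℝ) = generateFrom (Set.range Set.Iic) := by
      rw [show (Real.measurableSpace : MeasurableSpace ℝ) = borel ℝ from rfl,
        borel_eq_generateFrom_Iic]
    rw [hb, MeasurableSpace.comap_generateFrom]
    refine generateFrom_le ?_
    rintro _ ⟨_, ⟨a, rfl⟩, rfl⟩
    have key : (fun y : EuclideanSpace ℝ (Fin d) => y k) ⁻¹' Set.Iic a =
        ⋃ n : ℕ, rectSet (WithLp.toLp 2 (fun j => if j = k then a else (n : ℝ) : Fin d → ℝ)) := by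
      ext y
      simp only [Set.mem_preimage, Set.mem_Iic, Set.mem_iUnion, rectSet, Set.mem_setOf_eq]
      constructor
      · intro hy
        obtain ⟨n, hn⟩ := exists_nat_ge (Finset.univ.sup' ⟨k, Finset.mem_univ k⟩ fun j => y j)
        refine ⟨n, fun j => ?_⟩
        by_cases hj : j = k
        · subst hj; simpa using hy
        · simp only [hj, if_false]
          exact le_trans (Finset.le_sup' _ (Finset.mem_univ j)) hn
      · rintro ⟨n, hn⟩
        simpa using hn k
    have hres : MeasurableSet[generateFrom {S : Set (EuclideanSpace ℝ (Fin d)) | ∃ x, S = rectSet x}]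
        ((fun y : EuclideanSpace ℝ (Fin d) => y k) ⁻¹' Set.Iic a) := by
      rw [key]
      exact MeasurableSet.iUnion fun n => measurableSet_generateFrom ⟨_, rfl⟩
    exact hres
  · rintro _ ⟨x, rfl⟩
    exact measurableSet_rectSet x

end MonotoneMeasureAux

open MonotoneMeasureAux

/-- a probability measure `μ` on `ℝ_+^d` is monotone if and only if for all
`i, j ∈ {1,…,d}`, `(μ ⊗ μ)({(y,y') : y_i ≥ y'_i or y_j ≤ y'_j}) = 1`. -/
theorem isMonotoneMeasure_iff (d : ℕ) (hd : 1 ≤ d)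
    (μ : Measure (EuclideanSpace ℝ (Fin d))) [IsProbabilityMeasure μ]
    (hsupp : μ (orthant d)ᶜ = 0) :
    IsMonotoneMeasure d μ ↔
      ∀ i j : Fin d,
        (μ.prod μ) {p : EuclideanSpace ℝ (Fin d) × EuclideanSpace ℝ (Fin d) |
          p.2 i ≤ p.1 i ∨ p.1 j ≤ p.2 j} = 1 := by
  classical
  haveI hνprob : IsProbabilityMeasure (volume.restrict (Set.Ico (0 : ℝ) 1)) :=
    ⟨by simp [Real.volume_Ico]⟩
  have hSmeas : ∀ i j : Fin d,
      MeasurableSet {p : EuclideanSpace ℝ (Fin d) × EuclideanSpace ℝ (Fin d) |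
        p.2 i ≤ p.1 i ∨ p.1 j ≤ p.2 j} := by
    intro i j
    exact MeasurableSet.union
      (measurableSet_le ((measurable_coord i).comp measurable_snd)
        ((measurable_coord i).comp measurable_fst))
      (measurableSet_le ((measurable_coord j).comp measurable_fst)
        ((measurable_coord j).comp measurable_snd))
  constructor
  · rintro ⟨q, hq, horth, hmono, rfl⟩ i j
    obtain ⟨g, hgm, hqg⟩ := hq
    have h0 : (volume.restrict (Set.Ico (0 : ℝ) 1)) {s | q s ≠ g s} = 0 := ae_iff.mp hqg
    rw [Measure.map_congr hqg, Measure.map_prod_map _ _ hgm hgm,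
      Measure.map_apply (hgm.prodMap hgm) (hSmeas i j)]
    rw [← prob_compl_eq_zero_iff ((hgm.prodMap hgm) (hSmeas i j))]
    refine measure_mono_null (fun p hp => ?_)
      (?_ : ((volume.restrict (Set.Ico (0 : ℝ) 1)).prod (volume.restrict (Set.Ico (0 : ℝ) 1)))
        (({s | q s ≠ g s} ×ˢ (Set.univ : Set ℝ)) ∪ ((Set.univ : Set ℝ) ×ˢ {s | q s ≠ g s}) ∪
          (Set.Ico (0:ℝ) 1 ×ˢ Set.Ico (0:ℝ) 1)ᶜ) = 0)
    · obtain ⟨s, t⟩ := p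
      by_cases hqs : q s = g s
      · by_cases hqt : q t = g t
        · by_cases hs : s ∈ Set.Ico (0:ℝ) 1
          · by_cases ht : t ∈ Set.Ico (0:ℝ) 1
            · exfalso
              apply hp
              rcases le_total s t with hst | hts
              · have h5 : g s j ≤ g t j := by
                  rw [← hqs, ← hqt]
                  exact hmono s t hs.1 hst ht.2 j
                exact Or.inr h5
              · have h5 : g t i ≤ g s i := by
                  rw [← hqs, ← hqt]
                  exact hmono t s ht.1 hts hs.2 i
                exact Or.inl h5
            · exact Set.mem_union _ _ _ |>.mpr (Or.inr fun hm => ht (Set.mem_prod.mp hm).2)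
          · exact Set.mem_union _ _ _ |>.mpr (Or.inr fun hm => hs (Set.mem_prod.mp hm).1)
        · exact Set.mem_union _ _ _ |>.mpr
            (Or.inl (Set.mem_union _ _ _ |>.mpr (Or.inr (Set.mem_prod.mpr ⟨trivial, hqt⟩))))
      · exact Set.mem_union _ _ _ |>.mpr
          (Or.inl (Set.mem_union _ _ _ |>.mpr (Or.inl (Set.mem_prod.mpr ⟨hqs, trivial⟩))))
    · refine measure_union_null (measure_union_null ?_ ?_) ?_
      · rw [Measure.prod_prod, h0, zero_mul]
      · rw [Measure.prod_prod, h0, mul_zero]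
      · rw [measure_compl (measurableSet_Ico.prod measurableSet_Ico) (measure_ne_top _ _),
          Measure.prod_prod]
        have hIco : (volume.restrict (Set.Ico (0 : ℝ) 1)) (Set.Ico (0:ℝ) 1) = 1 := by
          rw [Measure.restrict_apply_self]; simp [Real.volume_Ico]
        simp [hIco]
  · intro H
    -- slab measurability
    have hslab : ∀ (k : Fin d) (x : ℝ),
        MeasurableSet {y : EuclideanSpace ℝ (Fin d) | y k ≤ x} :=
      fun k x => measurableSet_le (measurable_coord k) measurable_const
    have hGmono : ∀ (k : Fin d) {a b : ℝ}, a ≤ b →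
        μ {y : EuclideanSpace ℝ (Fin d) | y k ≤ a} ≤ μ {y | y k ≤ b} :=
      fun k a b hab => measure_mono fun y hy => le_trans hy hab
    have hGtop : ∀ (k : Fin d) (x : ℝ), μ {y : EuclideanSpace ℝ (Fin d) | y k ≤ x} ≠ ⊤ :=
      fun k x => measure_ne_top μ _
    -- nonemptiness of the quantile sets
    have hne : ∀ (k : Fin d) (t : ℝ), t < 1 →
        {x : ℝ | 0 ≤ x ∧ ENNReal.ofReal t ≤ μ {y : EuclideanSpace ℝ (Fin d) | y k ≤ x}}.Nonempty := by
      intro k t ht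
      have hun : (⋃ n : ℕ, {y : EuclideanSpace ℝ (Fin d) | y k ≤ (n : ℝ)}) = Set.univ := by
        ext y
        simp only [Set.mem_iUnion, Set.mem_univ, iff_true, Set.mem_setOf_eq]
        exact exists_nat_ge (y k)
      have hmon : Monotone fun n : ℕ => {y : EuclideanSpace ℝ (Fin d) | y k ≤ (n : ℝ)} := by
        intro a b hab y hy
        simp only [Set.mem_setOf_eq] at hy ⊢
        exact le_trans hy (by exact_mod_cast hab)
      have h1 : (1 : ℝ≥0∞) = ⨆ n : ℕ, μ {y : EuclideanSpace ℝ (Fin d) | y k ≤ (n : ℝ)} := by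
        rw [← measure_univ (μ := μ), ← hun, hmon.measure_iUnion]
      have h2 : ENNReal.ofReal t < ⨆ n : ℕ, μ {y : EuclideanSpace ℝ (Fin d) | y k ≤ (n : ℝ)} := by
        rw [← h1]
        exact ENNReal.ofReal_lt_one.mpr ht
      obtain ⟨n, hn⟩ := lt_iSup_iff.mp h2
      exact ⟨(n : ℝ), Nat.cast_nonneg n, hn.le⟩
    have hSbdd : ∀ (k : Fin d) (t : ℝ), BddBelow
        {x : ℝ | 0 ≤ x ∧ ENNReal.ofReal t ≤ μ {y : EuclideanSpace ℝ (Fin d) | y k ≤ x}} :=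
      fun k t => ⟨0, fun x hx => hx.1⟩
    -- the quantile map
    set q : ℝ → EuclideanSpace ℝ (Fin d) := fun t =>
      WithLp.toLp 2 (fun k => sInf {x : ℝ | 0 ≤ x ∧ ENNReal.ofReal t ≤
        μ {y : EuclideanSpace ℝ (Fin d) | y k ≤ x}} : Fin d → ℝ) with hqdef
    have hq0 : ∀ t : ℝ, t < 1 → ∀ k, 0 ≤ q t k :=
      fun t ht k => le_csInf (hne k t ht) fun x hx => hx.1
    have hqmono : ∀ s t : ℝ, s ≤ t → t < 1 → ∀ k, q s k ≤ q t k := by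
      intro s t hst ht k
      exact csInf_le_csInf (hSbdd k s) (hne k t ht)
        fun x hx => ⟨hx.1, le_trans (ENNReal.ofReal_le_ofReal hst) hx.2⟩
    -- right-continuity: the infimum belongs to the set
    have hmem : ∀ (k : Fin d) (t : ℝ), t < 1 →
        ENNReal.ofReal t ≤ μ {y : EuclideanSpace ℝ (Fin d) | y k ≤ q t k} := by
      intro k t ht
      have hne' := hne k t ht
      have hiInter : {y : EuclideanSpace ℝ (Fin d) | y k ≤ q t k} =
          ⋂ n : ℕ, {y | y k ≤ q t k + 1 / (n + 1)} := by
        ext y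
        simp only [Set.mem_iInter, Set.mem_setOf_eq]
        constructor
        · intro h n
          have hpos : (0:ℝ) < 1 / (n + 1) := by positivity
          linarith
        · intro h
          by_contra hcon
          push_neg at hcon
          obtain ⟨n, hn⟩ := exists_nat_one_div_lt (sub_pos.mpr hcon)
          have h2 := h n
          linarith
      have hanti : Antitone fun n : ℕ =>
          {y : EuclideanSpace ℝ (Fin d) | y k ≤ q t k + 1 / (n + 1)} := by
        intro a b hab y hy
        simp only [Set.mem_setOf_eq] at hy ⊢
        refine le_trans hy (add_le_add_right ?_ _)
        have ha1 : (0:ℝ) < (a:ℝ) + 1 := by positivity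
        refine one_div_le_one_div_of_le ha1 ?_
        exact_mod_cast add_le_add_left (Nat.cast_le.mpr hab) 1
      rw [hiInter, hanti.measure_iInter (fun n => (hslab k _).nullMeasurableSet)
        ⟨0, measure_ne_top _ _⟩]
      refine le_iInf fun n => ?_
      have hlt : q t k < q t k + 1 / (n + 1) := lt_add_of_pos_right _ (by positivity)
      obtain ⟨x, hxS, hx⟩ := exists_lt_of_csInf_lt hne' hlt
      exact le_trans hxS.2 (hGmono k hx.le)
    have hqle : ∀ (t : ℝ), 0 ≤ t → t < 1 → ∀ (k : Fin d) (x : ℝ), 0 ≤ x →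
        (q t k ≤ x ↔ ENNReal.ofReal t ≤ μ {y : EuclideanSpace ℝ (Fin d) | y k ≤ x}) := by
      intro t ht0 ht k x hx
      constructor
      · intro h
        exact le_trans (hmem k t ht) (hGmono k h)
      · intro h
        exact csInf_le (hSbdd k t) ⟨hx, h⟩
    -- measurability
    have hg'meas : Measurable (fun t =>
        WithLp.toLp 2 (fun k => Set.indicator (Set.Ico (0:ℝ) 1) (fun s => q s k) t : Fin d → ℝ) :
        ℝ → EuclideanSpace ℝ (Fin d)) := by
      refine measurable_euclidean fun k => ?_
      refine measurable_of_Iic fun a => ?_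
      have hset : (fun t => Set.indicator (Set.Ico (0:ℝ) 1) (fun s => q s k) t) ⁻¹' Set.Iic a =
          {t ∈ Set.Ico (0:ℝ) 1 | q t k ≤ a} ∪ {t | t ∉ Set.Ico (0:ℝ) 1 ∧ (0:ℝ) ≤ a} := by
        ext t
        constructor
        · intro h
          by_cases ht : t ∈ Set.Ico (0:ℝ) 1
          · exact Or.inl ⟨ht, by rwa [Set.mem_preimage, Set.mem_Iic,
              Set.indicator_of_mem ht] at h⟩
          · exact Or.inr ⟨ht, by rwa [Set.mem_preimage, Set.mem_Iic,
              Set.indicator_of_notMem ht] at h⟩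
        · rintro (⟨ht, h⟩ | ⟨ht, h⟩)
          · rw [Set.mem_preimage, Set.mem_Iic, Set.indicator_of_mem ht]
            exact h
          · rw [Set.mem_preimage, Set.mem_Iic, Set.indicator_of_notMem ht]
            exact h
      rw [hset]
      refine MeasurableSet.union ?_ ?_
      · refine Set.OrdConnected.measurableSet ⟨?_⟩
        rintro t1 ⟨ht1, h1⟩ t3 ⟨ht3, h3⟩ t2 ht2
        exact ⟨⟨le_trans ht1.1 ht2.1, lt_of_le_of_lt ht2.2 ht3.2⟩,
          le_trans (hqmono t2 t3 ht2.2 ht3.2 k) h3⟩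
      · have h2 : {t | t ∉ Set.Ico (0:ℝ) 1 ∧ (0:ℝ) ≤ a} =
            if (0:ℝ) ≤ a then (Set.Ico (0:ℝ) 1)ᶜ else ∅ := by
          split <;> ext t <;> simp [*]
        rw [h2]
        split
        · exact measurableSet_Ico.compl
        · exact MeasurableSet.empty
    have hqmeas : AEMeasurable q (volume.restrict (Set.Ico (0 : ℝ) 1)) := by
      refine ⟨_, hg'meas, ?_⟩
      filter_upwards [ae_restrict_mem measurableSet_Ico] with t ht
      ext k
      simp [Set.indicator_of_mem ht]
    -- pairwise comonotonicity
    have hpair : ∀ (i j : Fin d) (a b : ℝ),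
        μ ({y : EuclideanSpace ℝ (Fin d) | y i ≤ a} ∩ {y | y j ≤ b}) =
          min (μ {y : EuclideanSpace ℝ (Fin d) | y i ≤ a})
            (μ {y : EuclideanSpace ℝ (Fin d) | y j ≤ b}) := by
      intro i j a b
      have hnull : (μ.prod μ) {p : EuclideanSpace ℝ (Fin d) × EuclideanSpace ℝ (Fin d) |
          p.2 i ≤ p.1 i ∨ p.1 j ≤ p.2 j}ᶜ = 0 :=
        (prob_compl_eq_zero_iff (hSmeas i j)).mpr (H i j)
      have hAB : μ ({y : EuclideanSpace ℝ (Fin d) | y i ≤ a} \ {y | y j ≤ b}) *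
          μ ({y : EuclideanSpace ℝ (Fin d) | y j ≤ b} \ {y | y i ≤ a}) = 0 := by
        rw [← Measure.prod_prod]
        refine measure_mono_null ?_ hnull
        rintro ⟨u, v⟩ ⟨hu, hv⟩
        rintro (h | h)
        · exact hv.2 (le_trans h hu.1)
        · exact hu.2 (le_trans h hv.1)
      have h1 := measure_inter_add_diff (μ := μ) {y : EuclideanSpace ℝ (Fin d) | y i ≤ a} (hslab j b)
      have h2 := measure_inter_add_diff (μ := μ) {y : EuclideanSpace ℝ (Fin d) | y j ≤ b} (hslab i a)
      rcases mul_eq_zero.mp hAB with h0 | h0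
      · have hia : μ {y : EuclideanSpace ℝ (Fin d) | y i ≤ a} =
            μ ({y : EuclideanSpace ℝ (Fin d) | y i ≤ a} ∩ {y | y j ≤ b}) := by
          rw [← h1, h0, add_zero]
        have hle : μ {y : EuclideanSpace ℝ (Fin d) | y i ≤ a} ≤
            μ {y : EuclideanSpace ℝ (Fin d) | y j ≤ b} := by
          rw [hia]
          exact measure_mono Set.inter_subset_right
        rw [min_eq_left hle]
        exact hia.symm
      · have hjb : μ {y : EuclideanSpace ℝ (Fin d) | y j ≤ b} =
            μ ({y : EuclideanSpace ℝ (Fin d) | y i ≤ a} ∩ {y | y j ≤ b}) := by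
          rw [Set.inter_comm, ← h2, h0, add_zero]
        have hle : μ {y : EuclideanSpace ℝ (Fin d) | y j ≤ b} ≤
            μ {y : EuclideanSpace ℝ (Fin d) | y i ≤ a} := by
          rw [hjb]
          exact measure_mono Set.inter_subset_left
        rw [min_eq_right hle]
        exact hjb.symm
    -- the key rectangle computation
    have key : ∀ x : EuclideanSpace ℝ (Fin d),
        μ (rectSet x) = Measure.map q (volume.restrict (Set.Ico (0 : ℝ) 1)) (rectSet x) := by
      intro x
      rw [Measure.map_apply_of_aemeasurable hqmeas (measurableSet_rectSet x),
        Measure.restrict_apply' measurableSet_Ico]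
      by_cases hx : ∀ k, 0 ≤ x k
      · obtain ⟨k0, -, hk0⟩ := Finset.exists_min_image Finset.univ
          (fun k => μ {y : EuclideanSpace ℝ (Fin d) | y k ≤ x k}) ⟨⟨0, hd⟩, Finset.mem_univ _⟩
        have hsub : rectSet x ⊆ {y : EuclideanSpace ℝ (Fin d) | y k0 ≤ x k0} := fun y hy => hy k0
        have hdiffnull : μ ({y : EuclideanSpace ℝ (Fin d) | y k0 ≤ x k0} \ rectSet x) = 0 := by
          refine measure_mono_null (fun y hy => ?_)
            (?_ : μ (⋃ k, ({y : EuclideanSpace ℝ (Fin d) | y k0 ≤ x k0} \ {y | y k ≤ x k})) = 0)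
          · obtain ⟨hy0, hy1⟩ := hy
            simp only [rectSet, Set.mem_setOf_eq, not_forall] at hy1
            obtain ⟨k, hk⟩ := hy1
            exact Set.mem_iUnion.mpr ⟨k, hy0, hk⟩
          · refine measure_iUnion_null fun k => ?_
            have h1 := measure_inter_add_diff (μ := μ)
              {y : EuclideanSpace ℝ (Fin d) | y k0 ≤ x k0} (hslab k (x k))
            rw [hpair k0 k (x k0) (x k), min_eq_left (hk0 k (Finset.mem_univ k))] at h1
            exact (ENNReal.add_right_inj (hGtop k0 (x k0))).mp (h1.trans (add_zero _).symm)
        have hμrect : μ (rectSet x) = μ {y : EuclideanSpace ℝ (Fin d) | y k0 ≤ x k0} := by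
          have h3 := measure_inter_add_diff (μ := μ)
            {y : EuclideanSpace ℝ (Fin d) | y k0 ≤ x k0} (measurableSet_rectSet x)
          rw [Set.inter_eq_self_of_subset_right hsub, hdiffnull, add_zero] at h3
          exact h3
        have hset : q ⁻¹' rectSet x ∩ Set.Ico (0:ℝ) 1 =
            Set.Iic (μ {y : EuclideanSpace ℝ (Fin d) | y k0 ≤ x k0}).toReal ∩
              Set.Ico (0:ℝ) 1 := by
          ext t
          simp only [Set.mem_inter_iff, Set.mem_preimage, Set.mem_Ico, Set.mem_Iic, rectSet,
            Set.mem_setOf_eq]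
          constructor
          · rintro ⟨hqt, ht⟩
            refine ⟨?_, ht⟩
            have h4 := (hqle t ht.1 ht.2 k0 (x k0) (hx k0)).mp (hqt k0)
            exact (ENNReal.ofReal_le_iff_le_toReal (hGtop k0 (x k0))).mp h4
          · rintro ⟨htle, ht⟩
            refine ⟨fun k => ?_, ht⟩
            have h4 : ENNReal.ofReal t ≤ μ {y : EuclideanSpace ℝ (Fin d) | y k0 ≤ x k0} :=
              (ENNReal.ofReal_le_iff_le_toReal (hGtop k0 (x k0))).mpr htle
            exact (hqle t ht.1 ht.2 k (x k) (hx k)).mpr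
              (le_trans h4 (hk0 k (Finset.mem_univ k)))
        rw [hset, hμrect]
        set r := (μ {y : EuclideanSpace ℝ (Fin d) | y k0 ≤ x k0}).toReal with hrdef
        have hr1 : r ≤ 1 := by
          rw [hrdef]
          have h5 : μ {y : EuclideanSpace ℝ (Fin d) | y k0 ≤ x k0} ≤ 1 := prob_le_one
          calc (μ {y : EuclideanSpace ℝ (Fin d) | y k0 ≤ x k0}).toReal
              ≤ (1 : ℝ≥0∞).toReal := ENNReal.toReal_mono (by simp) h5
            _ = 1 := by simp
        have hle : volume (Set.Iic r ∩ Set.Ico (0:ℝ) 1) ≤ ENNReal.ofReal r := by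
          have hsub2 : Set.Iic r ∩ Set.Ico (0:ℝ) 1 ⊆ Set.Icc 0 r := fun t ht => ⟨ht.2.1, ht.1⟩
          calc volume (Set.Iic r ∩ Set.Ico (0:ℝ) 1) ≤ volume (Set.Icc (0:ℝ) r) :=
              measure_mono hsub2
            _ = ENNReal.ofReal r := by rw [Real.volume_Icc, sub_zero]
        have hge : ENNReal.ofReal r ≤ volume (Set.Iic r ∩ Set.Ico (0:ℝ) 1) := by
          have hsub3 : Set.Ico (0:ℝ) r ⊆ Set.Iic r ∩ Set.Ico (0:ℝ) 1 :=
            fun t ht => ⟨ht.2.le, ht.1, lt_of_lt_of_le ht.2 hr1⟩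
          calc ENNReal.ofReal r = volume (Set.Ico (0:ℝ) r) := by rw [Real.volume_Ico, sub_zero]
            _ ≤ _ := measure_mono hsub3
        rw [le_antisymm hle hge]
        exact (ENNReal.ofReal_toReal (hGtop k0 (x k0))).symm
      · push_neg at hx
        obtain ⟨k, hk⟩ := hx
        have h1 : μ (rectSet x) = 0 := by
          refine measure_mono_null (fun y hy => ?_) hsupp
          exact fun horth => absurd (horth k) (not_le.mpr (lt_of_le_of_lt (hy k) hk))
        have h2 : q ⁻¹' rectSet x ∩ Set.Ico (0:ℝ) 1 = ∅ := by
          rw [Set.eq_empty_iff_forall_notMem]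
          rintro t ⟨hqt, ht⟩
          exact absurd (le_trans (hq0 t ht.2 k) (hqt k)) (not_le.mpr hk)
        rw [h1, h2, measure_empty]
    refine ⟨q, hqmeas, ?_, ?_, ?_⟩
    · intro s hs0 hs1
      exact fun i => hq0 s hs1 i
    · intro s t hs0 hst ht1 i
      exact hqmono s t hst ht1 i
    · haveI : IsProbabilityMeasure (Measure.map q (volume.restrict (Set.Ico (0 : ℝ) 1))) :=
        Measure.isProbabilityMeasure_map hqmeas
      refine ext_of_generate_finite _ (generateFrom_rectSet hd) isPiSystem_rectSet ?_ ?_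
      · rintro _ ⟨x, rfl⟩
        exact key x
      · simp
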